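/- Let B_w be a bounded unilateral weighted backward shift on ℓ^p(ℕ), 1 ≤ p < ∞, with weight sequence (wₙ)_{n≥1} of nonzero scalars. If there exist x ∈ ℓ^p and a nonzero y ∈ ℓ^p such that y is a limit point of the orbit (B_w^n x)_{n≥0}, then sup_{n≥1} ∏_{ν=1}^n |w_ν| = ∞. -/

import Mathlib

open Filter

private lemma aux_rpow_tendsto {p : ℝ} (hp0 : 0 < p) {f : ℕ → ℝ} (hf : ∀ k, 0 ≤ f k)
    (h : Tendsto (fun k => f k ^ p) atTop (nhds 0)) : Tendsto f atTop (nhds 0) := by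
  have h2 := h.rpow_const (p := p⁻¹) (Or.inr (by positivity))
  rw [Real.zero_rpow (by positivity : p⁻¹ ≠ 0)] at h2
  have : (fun k => (f k ^ p) ^ p⁻¹) = f := by
    funext k; exact Real.rpow_rpow_inv (hf k) hp0.ne'
  rwa [this] at h2

private lemma aux_abs_sub_rpow {p : ℝ} (hp0 : 0 < p) (a b : ℝ) :
    |a - b| ^ p ≤ 2 ^ p * (|a| ^ p + |b| ^ p) := by
  have h1 : |a - b| ≤ 2 * max |a| |b| := by
    calc |a - b| ≤ |a| + |b| := abs_sub a b
    _ ≤ max |a| |b| + max |a| |b| := by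
        gcongr
        · exact le_max_left _ _
        · exact le_max_right _ _
    _ = 2 * max |a| |b| := (two_mul _).symm
  have h2 : |a - b| ^ p ≤ (2 * max |a| |b|) ^ p :=
    Real.rpow_le_rpow (abs_nonneg _) h1 hp0.le
  have h3 : (2 * max |a| |b|) ^ p = 2 ^ p * (max |a| |b|) ^ p :=
    Real.mul_rpow (by norm_num) (le_max_of_le_left (abs_nonneg _))
  have h4 : (max |a| |b|) ^ p ≤ |a| ^ p + |b| ^ p := by
    rcases max_cases |a| |b| with ⟨hm, _⟩ | ⟨hm, _⟩ <;> rw [hm]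
    · exact le_add_of_nonneg_right (Real.rpow_nonneg (abs_nonneg _) _)
    · exact le_add_of_nonneg_left (Real.rpow_nonneg (abs_nonneg _) _)
  calc |a - b| ^ p ≤ 2 ^ p * (max |a| |b|) ^ p := by rw [← h3]; exact h2
  _ ≤ 2 ^ p * (|a| ^ p + |b| ^ p) := by
      have : (0:ℝ) ≤ 2 ^ p := Real.rpow_nonneg (by norm_num) _
      nlinarith

theorem stmt8 (p : ℝ) (hp : 1 ≤ p) (w : ℕ → ℝ) (hw0 : ∀ n, w n ≠ 0)
    (C : ℝ) (hbd : ∀ n, |w n| ≤ C)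
    -- the unilateral weighted backward shift on sequences
    (Bw : (ℕ → ℝ) → (ℕ → ℝ)) (hBw : Bw = fun z i => w (i + 1) * z (i + 1))
    (x y : ℕ → ℝ)
    (hx : Summable fun i => |x i| ^ p) (hy : Summable fun i => |y i| ^ p)
    (hy0 : y ≠ 0)
    -- y is a limit point of the orbit: some subsequence of the orbit converges to y in ℓᵖ
    (hlim : ∃ n : ℕ → ℕ, StrictMono n ∧
      Tendsto (fun k => ∑' i : ℕ, |Bw^[n k] x i - y i| ^ p) atTop (nhds 0)) :
    ¬ BddAbove (Set.range fun n : ℕ => ∏ ν ∈ Finset.Icc 1 n, |w ν|) := by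
  have hp0 : (0:ℝ) < p := lt_of_lt_of_le one_pos hp
  rintro ⟨M, hM⟩
  subst hBw
  obtain ⟨nk, hmono, htend⟩ := hlim
  obtain ⟨i₀, hyi⟩ : ∃ i, y i ≠ 0 := by
    by_contra h
    push_neg at h
    exact hy0 (funext h)
  set P : ℕ → ℝ := fun n => ∏ ν ∈ Finset.Icc 1 n, |w ν| with hP
  have hMP : ∀ n, P n ≤ M := fun n => hM ⟨n, rfl⟩
  have hPpos : ∀ n, 0 < P n := fun n =>
    Finset.prod_pos fun ν _ => abs_pos.2 (hw0 ν)
  have hC : 0 < C := lt_of_lt_of_le (abs_pos.2 (hw0 0)) (hbd 0)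
  -- iterate formula
  have hiter : ∀ (n : ℕ) (z : ℕ → ℝ) (i : ℕ),
      (fun z i => w (i + 1) * z (i + 1))^[n] z i
        = (∏ ν ∈ Finset.Ioc i (i + n), w ν) * z (i + n) := by
    intro n
    induction n with
    | zero => intro z i; simp
    | succ n ih =>
      intro z i
      rw [Function.iterate_succ_apply, ih]
      have : i + (n + 1) = (i + n) + 1 := rfl
      rw [this, Finset.prod_Ioc_succ_top (Nat.le_add_right i n)]
      ring
  -- product bounds
  have hprodM : ∀ (n i : ℕ), ∏ ν ∈ Finset.Ioc i (i + n), |w ν| ≤ M / P i := by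
    intro n i
    rw [le_div_iff₀ (hPpos i)]
    have hIcc : ∀ m : ℕ, Finset.Icc 1 m = Finset.Ioc 0 m := fun m => Finset.Icc_add_one_left_eq_Ioc 0 m
    have hsplit : P i * ∏ ν ∈ Finset.Ioc i (i + n), |w ν| = P (i + n) := by
      simp only [hP, hIcc]
      exact Finset.prod_Ioc_consecutive _ (Nat.zero_le i) (Nat.le_add_right i n)
    calc (∏ ν ∈ Finset.Ioc i (i + n), |w ν|) * P i = P (i + n) := by
          rw [mul_comm]; exact hsplit
    _ ≤ M := hMP _
  have hprodC : ∀ (n i : ℕ), ∏ ν ∈ Finset.Ioc i (i + n), |w ν| ≤ C ^ n := by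
    intro n i
    calc ∏ ν ∈ Finset.Ioc i (i + n), |w ν| ≤ ∏ _ν ∈ Finset.Ioc i (i + n), C :=
          Finset.prod_le_prod (fun ν _ => abs_nonneg _) (fun ν _ => hbd ν)
    _ = C ^ n := by rw [Finset.prod_const, Nat.card_Ioc, Nat.add_sub_cancel_left]
  -- summability for each fixed n
  have hsum : ∀ n : ℕ, Summable fun i =>
      |(fun z i => w (i + 1) * z (i + 1))^[n] x i - y i| ^ p := by
    intro n
    refine Summable.of_nonneg_of_le
      (f := fun i => 2 ^ p * ((C ^ n) ^ p * |x (i + n)| ^ p + |y i| ^ p))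
      (fun i => Real.rpow_nonneg (abs_nonneg _) _) ?_ ?_
    · intro i
      refine (aux_abs_sub_rpow hp0 _ _).trans ?_
      have hb : |(fun z i => w (i + 1) * z (i + 1))^[n] x i| ^ p
          ≤ (C ^ n) ^ p * |x (i + n)| ^ p := by
        rw [hiter n x i, abs_mul, Finset.abs_prod,
          Real.mul_rpow (Finset.prod_nonneg fun ν _ => abs_nonneg _) (abs_nonneg _)]
        exact mul_le_mul_of_nonneg_right
          (Real.rpow_le_rpow (Finset.prod_nonneg fun ν _ => abs_nonneg _) (hprodC n i) hp0.le)
          (Real.rpow_nonneg (abs_nonneg _) _)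
      have h2p : (0:ℝ) ≤ 2 ^ p := Real.rpow_nonneg (by norm_num) _
      exact mul_le_mul_of_nonneg_left (add_le_add_left hb _) h2p
    · apply Summable.mul_left
      exact (( (summable_nat_add_iff n).2 hx).mul_left _).add hy
  -- coordinate i₀ converges to y i₀
  have hle : ∀ k, |(fun z i => w (i + 1) * z (i + 1))^[nk k] x i₀ - y i₀| ^ p
      ≤ ∑' i : ℕ, |(fun z i => w (i + 1) * z (i + 1))^[nk k] x i - y i| ^ p := by
    intro k
    exact Summable.le_tsum (hsum (nk k)) i₀ fun j _ => Real.rpow_nonneg (abs_nonneg _) _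
  have ht1 : Tendsto (fun k => |(fun z i => w (i + 1) * z (i + 1))^[nk k] x i₀ - y i₀| ^ p)
      atTop (nhds 0) :=
    squeeze_zero (fun k => Real.rpow_nonneg (abs_nonneg _) _) hle htend
  have ht2 : Tendsto (fun k => |(fun z i => w (i + 1) * z (i + 1))^[nk k] x i₀ - y i₀|)
      atTop (nhds 0) :=
    aux_rpow_tendsto hp0 (fun k => abs_nonneg _) ht1
  have ht3 : Tendsto (fun k => (fun z i => w (i + 1) * z (i + 1))^[nk k] x i₀)
      atTop (nhds (y i₀)) := by
    rw [← tendsto_sub_nhds_zero_iff]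
    exact (tendsto_zero_iff_abs_tendsto_zero _).2 ht2
  -- but the coordinate also tends to 0
  have hxt : Tendsto (fun i => |x i|) atTop (nhds 0) :=
    aux_rpow_tendsto hp0 (fun i => abs_nonneg _) hx.tendsto_atTop_zero
  have hidx : Tendsto (fun k => i₀ + nk k) atTop atTop :=
    tendsto_atTop_mono (fun k => Nat.le_add_left _ _) hmono.tendsto_atTop
  have hxk : Tendsto (fun k => |x (i₀ + nk k)|) atTop (nhds 0) := hxt.comp hidx
  have ht4 : Tendsto (fun k => (fun z i => w (i + 1) * z (i + 1))^[nk k] x i₀)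
      atTop (nhds 0) := by
    apply squeeze_zero_norm (a := fun k => (M / P i₀) * |x (i₀ + nk k)|)
    · intro k
      rw [Real.norm_eq_abs, hiter (nk k) x i₀, abs_mul, Finset.abs_prod]
      exact mul_le_mul_of_nonneg_right (hprodM _ _) (abs_nonneg _)
    · simpa using hxk.const_mul (M / P i₀)
  exact hyi (tendsto_nhds_unique ht3 ht4)
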